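/- Let M be the free k[[t]]-module with basis m_1,…,m_{e+1}, regarded as a representation of Q_e over k[[t]] with m_j in the vertex-j component for 1 ≤ j ≤ e−1 and m_e, m_{e+1} in the vertex-e component, and with structure maps α_j(m_j) = m_{j+1} for 1 ≤ j ≤ e−2, α_{e−1}(m_{e−1}) = t·m_{e+1}, α_e(m_e) = m_1, α_e(m_{e+1}) = 0, δ(m_e) = m_{e+1}, δ(m_{e+1}) = 0. Then: (i) these maps satisfy the defining relations of Λ_e, so M is a k[[t]] ⊗_k Λ_e-module that is free as a k[[t]]-module; (ii) M/tM is isomorphic to W as a Λ_e-module; (iii) M/t²M is not isomorphic to the trivial lift (k[t]/(t²)) ⊗_k W as a (k[t]/(t²)) ⊗_k Λ_e-module. -/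

import Mathlib

/-! Common framework: representations of the quiver Q_e / modules over the
generalized Brauer star algebra Λ_e, encoded as a module `V` together with
endomorphisms `v i` (images of the vertex idempotents), `a i` (images of the
arrows; `a i` is the arrow leaving vertex `i`, with `a ⟨e-1⟩` the arrow
`α_e : e → 1`) and `d` (image of the loop `δ`). -/

namespace GBTA

structure PreRep (R : Type) [CommRing R] (e : ℕ) : Type 1 where
  V : Type
  [instAdd : AddCommGroup V]
  [instMod : Module R V]
  v : Fin e → Module.End R V
  a : Fin e → Module.End R V
  d : Module.End R V

attribute [instance] PreRep.instAdd PreRep.instMod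

variable {R : Type} [CommRing R] {e : ℕ}

/-- The (0-based) index of the vertex `e`. -/
def ve (e : ℕ) [NeZero e] : Fin e :=
  ⟨e - 1, by have := Nat.pos_of_ne_zero (NeZero.ne e); omega⟩

/-- The (0-based) index of the vertex `e - 1`. -/
def vem (e : ℕ) [NeZero e] : Fin e :=
  ⟨e - 2, by have := Nat.pos_of_ne_zero (NeZero.ne e); omega⟩

/-- The cycle `C_i`: the composite of the `e` cyclically consecutive arrows
starting with the arrow leaving vertex `i` (composites written right to left). -/
def cyc [NeZero e] (ρ : PreRep R e) (i : Fin e) : Module.End R ρ.V :=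
  (((List.range e).reverse).map fun l => ρ.a (i + Fin.ofNat e l)).prod

/-- The defining relations of the generalized Brauer star algebra `Λ_e`. -/
def Satisfies [NeZero e] (ρ : PreRep R e) : Prop :=
  (∀ i j : Fin e, i ≠ j → ρ.v i * ρ.v j = 0) ∧
  (∀ i : Fin e, ρ.v i * ρ.v i = ρ.v i) ∧
  ((∑ i : Fin e, ρ.v i) = 1) ∧
  (∀ i : Fin e, ρ.a i = ρ.v (i + 1) * ρ.a i * ρ.v i) ∧
  (ρ.d = ρ.v (ve e) * ρ.d * ρ.v (ve e)) ∧
  (ρ.d * ρ.a (vem e) = 0) ∧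
  (ρ.a (ve e) * ρ.d = 0) ∧
  (ρ.d * ρ.d = cyc ρ (ve e) * cyc ρ (ve e)) ∧
  (∀ i : Fin e, i ≠ ve e → ρ.a i * (cyc ρ i * cyc ρ i) = 0)

/-- The space of `Λ_e`-module homomorphisms `ρ → σ`: linear maps commuting with
all the structure maps. -/
def homSet (ρ σ : PreRep R e) : Submodule R (ρ.V →ₗ[R] σ.V) where
  carrier := {f | (∀ i, f ∘ₗ ρ.v i = σ.v i ∘ₗ f) ∧ (∀ i, f ∘ₗ ρ.a i = σ.a i ∘ₗ f) ∧
    f ∘ₗ ρ.d = σ.d ∘ₗ f}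
  add_mem' := by
    rintro f g ⟨hfv, hfa, hfd⟩ ⟨hgv, hga, hgd⟩
    exact ⟨fun i => by simp only [LinearMap.add_comp, LinearMap.comp_add, hfv i, hgv i],
      fun i => by simp only [LinearMap.add_comp, LinearMap.comp_add, hfa i, hga i],
      by simp only [LinearMap.add_comp, LinearMap.comp_add, hfd, hgd]⟩
  zero_mem' := ⟨fun i => by simp, fun i => by simp, by simp⟩
  smul_mem' := by
    rintro c f ⟨hfv, hfa, hfd⟩
    exact ⟨fun i => by simp only [LinearMap.smul_comp, LinearMap.comp_smul, hfv i],
      fun i => by simp only [LinearMap.smul_comp, LinearMap.comp_smul, hfa i],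
      by simp only [LinearMap.smul_comp, LinearMap.comp_smul, hfd]⟩

/-- Projectivity of a `Λ_e`-module, via the lifting property in the category of
`Λ_e`-modules. -/
def IsProjective [NeZero e] (P : PreRep R e) : Prop :=
  Satisfies P ∧
  ∀ (A B : PreRep R e), Satisfies A → Satisfies B →
    ∀ p ∈ homSet A B, Function.Surjective p →
      ∀ g ∈ homSet P B, ∃ h ∈ homSet P A, p ∘ₗ h = g

/-- An endomorphism `f` of `ρ` factors through a projective `Λ_e`-module. -/
def FactorsThroughProjective [NeZero e] (ρ : PreRep R e) (f : ρ.V →ₗ[R] ρ.V) : Prop :=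
  ∃ P : PreRep R e, IsProjective P ∧ ∃ g ∈ homSet ρ P, ∃ h ∈ homSet P ρ, f = h ∘ₗ g

/-- "The stable endomorphism ring of `ρ` is isomorphic to the scalars": the identity
does not factor through a projective, and modulo endomorphisms factoring through
projectives every endomorphism is a scalar multiple of the identity. -/
def StableEndIsoScalars [NeZero e] (ρ : PreRep R e) : Prop :=
  (¬ FactorsThroughProjective ρ LinearMap.id) ∧
  ∀ f ∈ homSet ρ ρ, ∃ c : R, FactorsThroughProjective ρ (f - c • LinearMap.id)

/-- The linear map on `Fin m → W` sending the `src` coordinate to the `dst`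
coordinate through `g`, and killing all other coordinates. -/
def mk1 {m : ℕ} {W : Type} [AddCommGroup W] [Module R W] (src dst : Fin m)
    (g : W →ₗ[R] W) : (Fin m → W) →ₗ[R] (Fin m → W) where
  toFun x := fun r => if r = dst then g (x src) else 0
  map_add' x y := by funext r; by_cases h : r = dst <;> simp [h]
  map_smul' c x := by funext r; by_cases h : r = dst <;> simp [h]

/-- Projection onto the coordinates satisfying `S`. -/
def prj {m : ℕ} {W : Type} [AddCommGroup W] [Module R W] (S : Fin m → Prop)
    [DecidablePred S] : (Fin m → W) →ₗ[R] (Fin m → W) where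
  toFun x := fun r => if S r then x r else 0
  map_add' x y := by funext r; by_cases h : S r <;> simp [h]
  map_smul' c x := by funext r; by_cases h : S r <;> simp [h]

/-- Last row index (`e`, 0-based) among `e+1` rows. -/
def lastRow (e : ℕ) : Fin (e + 1) := ⟨e, Nat.lt_succ_self e⟩

/-- Second-to-last row index (`e-1`, 0-based) among `e+1` rows. -/
def sndRow (e : ℕ) : Fin (e + 1) := ⟨e - 1, by omega⟩

/-- The vertex carrying each of the `e+1` rows: row `r < e-1` sits at vertex `r`,
rows `e-1` and `e` sit at the vertex `e` (0-based index `e-1`). -/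
def vrt (e : ℕ) [NeZero e] : Fin (e + 1) → Fin e := fun r =>
  if h : r.val < e - 1 then ⟨r.val, by omega⟩ else ve e


/-- The `n × n` Jordan block with eigenvalue `lam`. -/
def jordan (R : Type) [CommRing R] (n : ℕ) (lam : R) : Matrix (Fin n) (Fin n) R :=
  Matrix.of fun i j => if i = j then lam else if (j : ℕ) = (i : ℕ) + 1 then 1 else 0

/-- The band module `B(n, lam)`. Rows `0, …, e-2` are the components `k^n` at the
vertices `1, …, e-1`; rows `e-1` and `e` are the two copies of `k^n` at vertex `e`. -/
@[reducible] def band (R : Type) [CommRing R] (e : ℕ) [NeZero e] (n : ℕ) (lam : R) : PreRep R e where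
  V := Fin (e + 1) → Fin n → R
  v i := prj fun r => vrt e r = i
  a j :=
    if j.val = e - 1 then mk1 (sndRow e) ⟨0, by omega⟩ LinearMap.id
    else if j.val = e - 2 then mk1 ⟨e - 2, by omega⟩ (lastRow e) LinearMap.id
    else mk1 ⟨j.val, Nat.lt_succ_of_lt j.isLt⟩ ⟨j.val + 1, Nat.succ_lt_succ j.isLt⟩ LinearMap.id
  d := mk1 (sndRow e) (lastRow e) (Matrix.mulVecLin (jordan R n lam))

/-- The band module `B(1, s)` (with `δ` acting through the scalar `s`); the standard
basis vector `c_i` (`1 ≤ i ≤ e-1`) is the `i-1`-st coordinate, `c_e` the `e-1`-st and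
`c_{e+1}` the `e`-th. -/
@[reducible] def band1 (R : Type) [CommRing R] (e : ℕ) [NeZero e] (s : R) : PreRep R e where
  V := Fin (e + 1) → R
  v i := prj fun r => vrt e r = i
  a j :=
    if j.val = e - 1 then mk1 (sndRow e) ⟨0, by omega⟩ LinearMap.id
    else if j.val = e - 2 then mk1 ⟨e - 2, by omega⟩ (lastRow e) LinearMap.id
    else mk1 ⟨j.val, Nat.lt_succ_of_lt j.isLt⟩ ⟨j.val + 1, Nat.succ_lt_succ j.isLt⟩ LinearMap.id
  d := mk1 (sndRow e) (lastRow e) (s • LinearMap.id)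

/-- The projective module `P_e`, with basis `b_{i,1}, b_{i,2}` (row `i-1`) for
`1 ≤ i ≤ e-1` and `b_{e,1}, b_{e,2}` (row `e-1`), `b_{e,3}, b_{e,4}` (row `e`). -/
@[reducible] def Pe (R : Type) [CommRing R] (e : ℕ) [NeZero e] : PreRep R e where
  V := Fin (e + 1) → Fin 2 → R
  v i := prj fun r => vrt e r = i
  a j :=
    if j.val = e - 1 then mk1 (sndRow e) ⟨0, by omega⟩ LinearMap.id
    else if j.val = e - 2 then
      mk1 ⟨e - 2, by omega⟩ (sndRow e) (Matrix.mulVecLin !![0, 0; 1, 0])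
        + mk1 ⟨e - 2, by omega⟩ (lastRow e) (Matrix.mulVecLin !![0, 0; 0, 1])
    else mk1 ⟨j.val, Nat.lt_succ_of_lt j.isLt⟩ ⟨j.val + 1, Nat.succ_lt_succ j.isLt⟩ LinearMap.id
  d := mk1 (sndRow e) (lastRow e) (Matrix.mulVecLin !![1, 0; 0, 0])
    + mk1 (lastRow e) (lastRow e) (Matrix.mulVecLin !![0, 0; 1, 0])

/-- `Mdef R e τ`: the representation with basis `m_1, …, m_{e+1}` (rows `0, …, e`),
`α_j(m_j) = m_{j+1}` for `j ≤ e-2`, `α_{e-1}(m_{e-1}) = τ · m_{e+1}`,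
`α_e(m_e) = m_1`, `δ(m_e) = m_{e+1}`.  For `τ = 0` this is the string module `W`. -/
@[reducible] def Mdef (R : Type) [CommRing R] (e : ℕ) [NeZero e] (t : R) : PreRep R e where
  V := Fin (e + 1) → R
  v i := prj fun r => vrt e r = i
  a j :=
    if j.val = e - 1 then mk1 (sndRow e) ⟨0, by omega⟩ LinearMap.id
    else if j.val = e - 2 then mk1 ⟨e - 2, by omega⟩ (lastRow e) (t • LinearMap.id)
    else mk1 ⟨j.val, Nat.lt_succ_of_lt j.isLt⟩ ⟨j.val + 1, Nat.succ_lt_succ j.isLt⟩ LinearMap.id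
  d := mk1 (sndRow e) (lastRow e) LinearMap.id

/-- The uniserial module `U_{[i,j]}` (with `1 ≤ i ≤ j ≤ e`, 1-based). -/
@[reducible] def U (R : Type) [CommRing R] (e i j : ℕ) : PreRep R e where
  V := Fin (j + 1 - i) → R
  v t := prj fun r => i - 1 + r.val = t.val
  a t :=
    if h : i ≤ t.val + 1 ∧ t.val + 1 ≤ j - 1 then
      mk1 ⟨t.val + 1 - i, by omega⟩ ⟨t.val + 2 - i, by omega⟩ LinearMap.id
    else 0
  d := 0

/-- The uniserial projective module `P_i` (`i0` is the 0-based index of the vertex),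
with basis `p_0, …, p_{2e}` following the cycle of arrows twice around. -/
@[reducible] def Puni (R : Type) [CommRing R] (e : ℕ) [NeZero e] (i0 : ℕ) : PreRep R e where
  V := Fin (2 * e + 1) → R
  v t := prj fun r => (i0 + r.val) % e = t.val
  a t := ∑ l : Fin (2 * e),
    if (i0 + l.val) % e = t.val then mk1 l.castSucc l.succ LinearMap.id else 0
  d := 0

/-- The simple module `S_e` at the vertex `e`. -/
@[reducible] def Se (R : Type) [CommRing R] (e : ℕ) [NeZero e] : PreRep R e where
  V := R
  v i := if i = ve e then 1 else 0
  a _ := 0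
  d := 0

/-- Block upper triangular endomorphism `(x, y) ↦ (f x + θ y, f y)` of `V × V`. -/
def blk {V : Type} [AddCommGroup V] [Module R V] (f th : Module.End R V) :
    Module.End R (V × V) where
  toFun p := (f p.1 + th p.2, f p.2)
  map_add' p q := by
    simp only [Prod.fst_add, Prod.snd_add, map_add, Prod.mk_add_mk, Prod.mk.injEq, and_true]
    abel
  map_smul' c p := by
    simp only [Prod.smul_fst, Prod.smul_snd, map_smul, Prod.smul_mk, Prod.mk.injEq,
      smul_add, RingHom.id_apply, and_self]

section Ext
variable [NeZero e]

/-- The data of a self-extension of `ρ`: for each generator of `Λ_e`, the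
off-diagonal block of its action on `ρ.V × ρ.V`. -/
abbrev Cochain (ρ : PreRep R e) : Type :=
  (Fin e → Module.End R ρ.V) × (Fin e → Module.End R ρ.V) × Module.End R ρ.V

/-- The self-extension of `ρ` determined by the cochain `θ`. -/
@[reducible] def extRep (ρ : PreRep R e) (th : Cochain ρ) : PreRep R e where
  V := ρ.V × ρ.V
  v i := blk (ρ.v i) (th.1 i)
  a i := blk (ρ.a i) (th.2.1 i)
  d := blk ρ.d th.2.2

/-- `θ` is a cocycle precisely when the corresponding extension is a `Λ_e`-module. -/
def IsCocycle (ρ : PreRep R e) (th : Cochain ρ) : Prop := Satisfies (extRep ρ th)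

/-- The coboundary of `φ`; extensions differing by a coboundary are equivalent. -/
def bnd (ρ : PreRep R e) (phi : Module.End R ρ.V) : Cochain ρ :=
  (fun i => ρ.v i * phi - phi * ρ.v i, fun i => ρ.a i * phi - phi * ρ.a i,
    ρ.d * phi - phi * ρ.d)

/-- `Ext¹_{Λ_e}(ρ, ρ)`, i.e. the space of self-extensions of `ρ` modulo equivalence
(equivalently cocycles modulo coboundaries), is one-dimensional. -/
def ExtSelfOneDimensional (ρ : PreRep R e) : Prop :=
  ∃ th0 : Cochain ρ, IsCocycle ρ th0 ∧ (∀ phi, th0 ≠ bnd ρ phi) ∧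
    ∀ th : Cochain ρ, IsCocycle ρ th → ∃ (c : R) (phi : Module.End R ρ.V),
      th = c • th0 + bnd ρ phi

end Ext


/-- The endomorphism algebra of a representation. -/
def endAlg (ρ : PreRep R e) : Subalgebra R (Module.End R ρ.V) where
  carrier := {f | (∀ i, f * ρ.v i = ρ.v i * f) ∧ (∀ i, f * ρ.a i = ρ.a i * f) ∧
    f * ρ.d = ρ.d * f}
  mul_mem' := by
    rintro f g ⟨hfv, hfa, hfd⟩ ⟨hgv, hga, hgd⟩
    refine ⟨fun i => ?_, fun i => ?_, ?_⟩
    · rw [mul_assoc, hgv i, ← mul_assoc, hfv i, mul_assoc]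
    · rw [mul_assoc, hga i, ← mul_assoc, hfa i, mul_assoc]
    · rw [mul_assoc, hgd, ← mul_assoc, hfd, mul_assoc]
  one_mem' := ⟨fun i => by rw [one_mul, mul_one], fun i => by rw [one_mul, mul_one],
    by rw [one_mul, mul_one]⟩
  add_mem' := by
    rintro f g ⟨hfv, hfa, hfd⟩ ⟨hgv, hga, hgd⟩
    exact ⟨fun i => by rw [add_mul, mul_add, hfv i, hgv i],
      fun i => by rw [add_mul, mul_add, hfa i, hga i],
      by rw [add_mul, mul_add, hfd, hgd]⟩
  zero_mem' := ⟨fun i => by rw [zero_mul, mul_zero], fun i => by rw [zero_mul, mul_zero],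
    by rw [zero_mul, mul_zero]⟩
  algebraMap_mem' c :=
    ⟨fun i => Algebra.commutes c (ρ.v i), fun i => Algebra.commutes c (ρ.a i),
      Algebra.commutes c ρ.d⟩

/-- The endomorphism `τ` of `B(1,λ)` (and of `W`): `c_e ↦ c_{e+1}`, all other
standard basis vectors to `0`. -/
def tau (R : Type) [CommRing R] (e : ℕ) : (Fin (e + 1) → R) →ₗ[R] (Fin (e + 1) → R) :=
  mk1 (sndRow e) (lastRow e) LinearMap.id

/-- The map `r₁ : B(1,λ) → P_e` (with parameter `μ` the coefficient on `b_{e,3}`):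
`c_i ↦ b_{i,2}` for `1 ≤ i ≤ e-1`, `c_e ↦ b_{e,2} + μ b_{e,3}`, `c_{e+1} ↦ b_{e,4}`. -/
def r1 (R : Type) [CommRing R] (e : ℕ) (mu : R) :
    (Fin (e + 1) → R) →ₗ[R] (Fin (e + 1) → Fin 2 → R) where
  toFun x := fun r c => if c = 1 then x r else if r = lastRow e then mu * x (sndRow e) else 0
  map_add' x y := by
    funext r c
    by_cases h : c = 1
    · simp [h]
    · by_cases h2 : r = lastRow e <;> simp [h, h2, mul_add]
  map_smul' t x := by
    funext r c
    by_cases h : c = 1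
    · simp [h]
    · by_cases h2 : r = lastRow e <;> simp [h, h2] <;> ring

/-- The map `r₂ : B(1,λ) → P_e`: `c_e ↦ b_{e,4}`, all other basis vectors to `0`. -/
def r2 (R : Type) [CommRing R] (e : ℕ) :
    (Fin (e + 1) → R) →ₗ[R] (Fin (e + 1) → Fin 2 → R) where
  toFun x := fun r c => if r = lastRow e ∧ c = 1 then x (sndRow e) else 0
  map_add' x y := by
    funext r c
    by_cases h : r = lastRow e ∧ c = 1 <;> simp [h]
  map_smul' t x := by
    funext r c
    by_cases h : r = lastRow e ∧ c = 1 <;> simp [h]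

/-- The map `s₁ : P_e → B(1,λ)`: `b_{e,1} ↦ c_e`, `b_{e,2} ↦ c_{e+1}`,
`b_{e,3} ↦ λ c_{e+1}`, `b_{i,1} ↦ c_i`; zero on `b_{e,4}` and the `b_{i,2}`. -/
def s1 (R : Type) [CommRing R] (e : ℕ) (lam : R) :
    (Fin (e + 1) → Fin 2 → R) →ₗ[R] (Fin (e + 1) → R) where
  toFun y := fun r =>
    if r = lastRow e then y (sndRow e) 1 + lam * y (lastRow e) 0 else y r 0
  map_add' x y := by
    funext r
    by_cases h : r = lastRow e <;> simp [h, mul_add] <;> ring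
  map_smul' t x := by
    funext r
    by_cases h : r = lastRow e <;> simp [h] <;> ring

/-- The map `s₂ : P_e → B(1,λ)`: `b_{e,1} ↦ c_{e+1}`, all other basis vectors to `0`. -/
def s2 (R : Type) [CommRing R] (e : ℕ) :
    (Fin (e + 1) → Fin 2 → R) →ₗ[R] (Fin (e + 1) → R) where
  toFun y := fun r => if r = lastRow e then y (sndRow e) 0 else 0
  map_add' x y := by funext r; by_cases h : r = lastRow e <;> simp [h]
  map_smul' t x := by funext r; by_cases h : r = lastRow e <;> simp [h]

/-- The map `g : W → P_e`, `w_e ↦ b_{e,3}`, `w_{e+1} ↦ b_{e,4}`, `w_j ↦ 0`. -/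
def gW (R : Type) [CommRing R] (e : ℕ) :
    (Fin (e + 1) → R) →ₗ[R] (Fin (e + 1) → Fin 2 → R) where
  toFun x := fun r c =>
    if r = lastRow e then (if c = 0 then x (sndRow e) else x (lastRow e)) else 0
  map_add' x y := by
    funext r c
    by_cases h : r = lastRow e <;> by_cases h2 : c = 0 <;> simp [h, h2]
  map_smul' t x := by
    funext r c
    by_cases h : r = lastRow e <;> by_cases h2 : c = 0 <;> simp [h, h2]

/-- The map `h : P_e → W`, `b_{e,1} ↦ w_e`, `b_{j,1} ↦ w_j`, `b_{e,3} ↦ w_{e+1}`,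
zero on `b_{e,2}`, `b_{e,4}` and the `b_{j,2}`. -/
def hW (R : Type) [CommRing R] (e : ℕ) :
    (Fin (e + 1) → Fin 2 → R) →ₗ[R] (Fin (e + 1) → R) where
  toFun y := fun r => y r 0
  map_add' x y := rfl
  map_smul' t x := rfl


/-- `k[t]/(t²)`. -/
noncomputable abbrev Rtwo (k : Type) [Field k] : Type :=
  Polynomial k ⧸ Ideal.span {(Polynomial.X : Polynomial k) ^ 2}

/-- The class of `t` in `k[t]/(t²)`. -/
noncomputable def th2 (k : Type) [Field k] : Rtwo k :=
  Ideal.Quotient.mk _ Polynomial.X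


section Statement15Aux

variable {R : Type} [CommRing R] {e : ℕ}

lemma mk1_apply {m : ℕ} {W : Type} [AddCommGroup W] [Module R W] (src dst : Fin m)
    (g : W →ₗ[R] W) (x : Fin m → W) (r : Fin m) :
    mk1 src dst g x r = if r = dst then g (x src) else 0 := rfl

lemma prj_apply {m : ℕ} {W : Type} [AddCommGroup W] [Module R W] (S : Fin m → Prop)
    [DecidablePred S] (x : Fin m → W) (r : Fin m) :
    prj (R := R) S x r = if S r then x r else 0 := rfl

lemma mk1_mul_mk1_of_ne {m : ℕ} {W : Type} [AddCommGroup W] [Module R W]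
    {s1 d1 s2 d2 : Fin m} (g1 g2 : W →ₗ[R] W) (h : s2 ≠ d1) :
    (mk1 s2 d2 g2 : Module.End R (Fin m → W)) * mk1 s1 d1 g1 = 0 := by
  apply LinearMap.ext; intro x; funext r
  simp [Module.End.mul_apply, mk1_apply, h]

lemma prj_mul_mk1_mul_prj {m : ℕ} {W : Type} [AddCommGroup W] [Module R W]
    {S T : Fin m → Prop} [DecidablePred S] [DecidablePred T] {src dst : Fin m}
    (g : W →ₗ[R] W) (hS : S dst) (hT : T src) :
    (prj S : Module.End R (Fin m → W)) * mk1 src dst g * prj T = mk1 src dst g := by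
  apply LinearMap.ext; intro x; funext r
  by_cases h : r = dst <;>
    simp [Module.End.mul_apply, mk1_apply, prj_apply, h, hS, hT]

variable [NeZero e]

lemma fin_cases3 (he : 2 ≤ e) (i : Fin e) : i = ve e ∨ i = vem e ∨ i.val < e - 2 := by
  have hi := i.isLt
  by_cases h : i.val = e - 1
  · exact Or.inl (Fin.ext h)
  by_cases h2 : i.val = e - 2
  · exact Or.inr (Or.inl (Fin.ext h2))
  · exact Or.inr (Or.inr (by omega))

lemma vrt_lt (r : Fin (e+1)) (h : r.val < e - 1) : vrt e r = ⟨r.val, by omega⟩ :=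
  dif_pos h

lemma vrt_ge (r : Fin (e+1)) (h : ¬ r.val < e - 1) : vrt e r = ve e :=
  dif_neg h

lemma ve_add_one (he : 2 ≤ e) : ve e + 1 = ⟨0, by omega⟩ := by
  apply Fin.ext
  rw [Fin.val_add, Fin.val_one']
  show ((e-1) + 1 % e) % e = 0
  rw [Nat.mod_eq_of_lt (by omega : 1 < e), Nat.sub_add_cancel (by omega), Nat.mod_self]

lemma vem_add_one (he : 2 ≤ e) : vem e + 1 = ve e := by
  apply Fin.ext
  rw [Fin.val_add, Fin.val_one']
  show ((e-2) + 1 % e) % e = e - 1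
  rw [Nat.mod_eq_of_lt (by omega : 1 < e), show e - 2 + 1 = e - 1 by omega]
  exact Nat.mod_eq_of_lt (by omega)

lemma small_add_one (i : Fin e) (h : i.val < e - 2) : i + 1 = ⟨i.val + 1, by omega⟩ := by
  apply Fin.ext
  rw [Fin.val_add, Fin.val_one', Nat.mod_eq_of_lt (by omega : 1 < e)]
  exact Nat.mod_eq_of_lt (by omega)

lemma Mdef_v (t : R) (i : Fin e) :
    (Mdef R e t).v i = prj fun r => vrt e r = i := rfl

lemma Mdef_d (t : R) : (Mdef R e t).d = mk1 (sndRow e) (lastRow e) LinearMap.id := rfl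

lemma Mdef_a_ve (t : R) (he : 2 ≤ e) :
    (Mdef R e t).a (ve e) = mk1 (sndRow e) ⟨0, by omega⟩ LinearMap.id := by
  show (if (ve e).val = e - 1 then _ else _) = _
  rw [if_pos (show (ve e).val = e - 1 from rfl)]

lemma Mdef_a_vem (t : R) (he : 2 ≤ e) :
    (Mdef R e t).a (vem e) = mk1 ⟨e - 2, by omega⟩ (lastRow e) (t • LinearMap.id) := by
  show (if (vem e).val = e - 1 then _ else if (vem e).val = e - 2 then _ else _) = _
  rw [if_neg (by show ¬ e - 2 = e - 1; omega),
    if_pos (show (vem e).val = e - 2 from rfl)]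

lemma Mdef_a_small (t : R) (he : 2 ≤ e) (i : Fin e) (h : i.val < e - 2) :
    (Mdef R e t).a i
      = mk1 ⟨i.val, Nat.lt_succ_of_lt i.isLt⟩ ⟨i.val + 1, Nat.succ_lt_succ i.isLt⟩
          LinearMap.id := by
  show (if i.val = e - 1 then _ else if i.val = e - 2 then _ else _) = _
  rw [if_neg (by omega), if_neg (by omega)]

lemma sndRow_ne_lastRow (he : 2 ≤ e) : sndRow e ≠ lastRow e := by
  intro h
  have h2 : e - 1 = e := congrArg Fin.val h
  omega

lemma Mdef_hz (t : R) (he : 2 ≤ e) :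
    (Mdef R e t).a (ve e) * (Mdef R e t).a (vem e) = 0 := by
  rw [Mdef_a_ve t he, Mdef_a_vem t he]
  exact mk1_mul_mk1_of_ne _ _ (sndRow_ne_lastRow he)

lemma coe_list (L : List ℕ) :
    (L.map (fun n : ℕ => Fin.ofNat e n)).length = L.length := by
  simp

lemma cyc_split (ρ : PreRep R e) (i : Fin e) (l : ℕ) (h : l + 2 ≤ e) :
    cyc ρ i =
      (((List.range' (l+2) (e - (l+2))).reverse).map fun n => ρ.a (i + Fin.ofNat e n)).prod *
      (ρ.a (i + Fin.ofNat e (l+1)) *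
       (ρ.a (i + Fin.ofNat e l) *
        (((List.range' 0 l).reverse).map fun n => ρ.a (i + Fin.ofNat e n)).prod)) := by
  have key : List.range e = (List.range' 0 l ++ [l, l+1]) ++ List.range' (l+2) (e - (l+2)) := by
    have h1 : List.range' 0 l ++ List.range' l 2 = List.range' 0 (2 + l) := by
      simpa [Nat.add_comm] using List.range'_append (s := 0) (m := l) (n := 2) (step := 1)
    have h2 : List.range' 0 (2+l) ++ List.range' (2+l) (e - (l+2))
        = List.range' 0 ((e - (l+2)) + (2+l)) := by
      simpa [Nat.add_comm] using List.range'_append (s := 0) (m := 2+l) (n := e - (l+2)) (step := 1)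
    have h2' : List.range' (2+l) (e - (l+2)) = List.range' (l+2) (e - (l+2)) := by
      rw [Nat.add_comm]
    rw [h2'] at h2
    have h3 : (e - (l+2)) + (2+l) = e := by omega
    rw [h3] at h2
    rw [List.range_eq_range', ← h2, ← h1]
    rfl
  simp only [cyc, key, coe_list, List.map_map, List.reverse_append, List.map_append,
    List.prod_append, List.reverse_cons, List.reverse_nil, List.nil_append, List.map_cons,
    List.map_nil, List.prod_cons, List.prod_nil, List.cons_append, mul_one, mul_assoc,
    Function.comp]

lemma cyc_peel_right (ρ : PreRep R e) (i : Fin e) (he : 2 ≤ e) :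
    cyc ρ i =
      (((List.range' 1 (e-1)).reverse).map fun n => ρ.a (i + Fin.ofNat e n)).prod * ρ.a i := by
  have key : List.range e = 0 :: List.range' 1 (e-1) := by
    rw [List.range_eq_range']
    have : List.range' 0 ((e-1)+1) = 0 :: List.range' (0+1) (e-1) := List.range'_succ (s := 0) (n := e-1) (step := 1)
    rw [show e = (e-1)+1 by omega]
    simpa using this
  simp only [cyc, key, coe_list, List.map_map, List.reverse_cons, List.map_append,
    List.prod_append, List.map_cons, List.map_nil, List.prod_cons, List.prod_nil, mul_one,
    Nat.cast_zero, Fin.ofNat_zero, add_zero, Function.comp]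

lemma cyc_peel_left (ρ : PreRep R e) (i : Fin e) (he : 2 ≤ e) :
    cyc ρ i =
      ρ.a (i + Fin.ofNat e (e-1)) *
        (((List.range (e-1)).reverse).map fun n => ρ.a (i + Fin.ofNat e n)).prod := by
  have key : List.range e = List.range (e-1) ++ [e-1] := by
    conv_lhs => rw [show e = (e-1)+1 by omega]
    exact List.range_succ (n := e-1)
  simp only [cyc, key, coe_list, List.map_map, List.reverse_append, List.map_append,
    List.prod_append, List.reverse_cons, List.reverse_nil, List.nil_append, List.map_cons,
    List.map_nil, List.prod_cons, List.prod_nil, mul_one, Function.comp]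

lemma ve_add_sub_one (he : 2 ≤ e) : ve e + Fin.ofNat e (e-1) = vem e := by
  apply Fin.ext
  rw [Fin.val_add, Fin.val_ofNat, Nat.mod_eq_of_lt (by omega : e - 1 < e)]
  show ((e-1) + (e-1)) % e = e - 2
  rw [show (e-1) + (e-1) = e + (e-2) by omega, Nat.add_mod_left]
  exact Nat.mod_eq_of_lt (by omega)

lemma cyc_sq_eq_zero (he : 2 ≤ e) (ρ : PreRep R e)
    (hz : ρ.a (ve e) * ρ.a (vem e) = 0) :
    cyc ρ (ve e) * cyc ρ (ve e) = 0 := by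
  have h1 := cyc_peel_right ρ (ve e) he
  have h2 := cyc_peel_left ρ (ve e) he
  rw [ve_add_sub_one he] at h2
  nth_rewrite 2 [h2]
  nth_rewrite 1 [h1]
  rw [mul_assoc, ← mul_assoc (ρ.a (ve e)), hz, zero_mul, mul_zero]

lemma cyc_eq_zero (he : 2 ≤ e) (ρ : PreRep R e)
    (hz : ρ.a (ve e) * ρ.a (vem e) = 0) (i : Fin e) (hi : i ≠ ve e) :
    cyc ρ i = 0 := by
  have hival : i.val < e - 1 := by
    have hlt := i.isLt
    rcases Nat.lt_or_ge i.val (e-1) with h|h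
    · exact h
    · exact absurd (Fin.ext (show i.val = (ve e).val from by show i.val = e - 1; omega)) hi
  set l := e - 2 - i.val with hl
  have h2 : l + 2 ≤ e := by omega
  rw [cyc_split ρ i l h2]
  have e1 : i + Fin.ofNat e (l+1) = ve e := by
    apply Fin.ext
    rw [Fin.val_add, Fin.val_ofNat, Nat.mod_eq_of_lt (by omega : l + 1 < e)]
    show (i.val + (l+1)) % e = e - 1
    rw [show i.val + (l+1) = e - 1 by omega]
    exact Nat.mod_eq_of_lt (by omega)
  have e2 : i + Fin.ofNat e l = vem e := by
    apply Fin.ext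
    rw [Fin.val_add, Fin.val_ofNat, Nat.mod_eq_of_lt (by omega : l < e)]
    show (i.val + l) % e = e - 2
    rw [show i.val + l = e - 2 by omega]
    exact Nat.mod_eq_of_lt (by omega)
  rw [e1, e2, ← mul_assoc (ρ.a (ve e)), hz, zero_mul, mul_zero]

lemma Mdef_satisfies (t : R) (he : 2 ≤ e) : Satisfies (Mdef R e t) := by
  refine ⟨?_, ?_, ?_, ?_, ?_, ?_, ?_, ?_, ?_⟩
  · intro i j hij
    apply LinearMap.ext; intro x; funext r
    by_cases h1 : vrt e r = i
    · by_cases h2 : vrt e r = j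
      · exact absurd (h1.symm.trans h2) hij
      · simp only [Mdef_v, Module.End.mul_apply, prj_apply, h1, h2, if_false, if_neg hij,
          if_true, if_pos rfl]
        rfl
    · simp only [Mdef_v, Module.End.mul_apply, prj_apply, h1, if_neg h1]
      rfl
  · intro i
    apply LinearMap.ext; intro x; funext r
    by_cases h1 : vrt e r = i <;>
      simp [Mdef_v, Module.End.mul_apply, prj_apply, h1]
  · apply LinearMap.ext; intro x; funext r
    rw [LinearMap.sum_apply]
    simp [Mdef_v, prj_apply, Finset.sum_apply, Finset.sum_ite_eq, Module.End.one_apply]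
  · intro i
    rcases fin_cases3 he i with h | h | h
    · subst h
      rw [Mdef_a_ve t he, Mdef_v, Mdef_v]
      refine (prj_mul_mk1_mul_prj _ ?_ ?_).symm
      · rw [vrt_lt _ (by show (0:ℕ) < e - 1; omega), ve_add_one he]
      · exact vrt_ge _ (by show ¬ e - 1 < e - 1; omega)
    · subst h
      rw [Mdef_a_vem t he, Mdef_v, Mdef_v]
      refine (prj_mul_mk1_mul_prj _ ?_ ?_).symm
      · rw [vrt_ge _ (by show ¬ e < e - 1; omega), vem_add_one he]
      · rw [vrt_lt _ (by show e - 2 < e - 1; omega)]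
        rfl
    · rw [Mdef_a_small t he i h, Mdef_v, Mdef_v]
      refine (prj_mul_mk1_mul_prj _ ?_ ?_).symm
      · rw [vrt_lt _ (by show i.val + 1 < e - 1; omega), small_add_one i h]
      · rw [vrt_lt _ (by show i.val < e - 1; omega)]
  · rw [Mdef_d, Mdef_v]
    refine (prj_mul_mk1_mul_prj _ ?_ ?_).symm
    · exact vrt_ge _ (by show ¬ e < e - 1; omega)
    · exact vrt_ge _ (by show ¬ e - 1 < e - 1; omega)
  · rw [show vem e = vem e from rfl, Mdef_d, Mdef_a_vem t he]
    exact mk1_mul_mk1_of_ne _ _ (sndRow_ne_lastRow he)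
  · rw [Mdef_a_ve t he, Mdef_d]
    exact mk1_mul_mk1_of_ne _ _ (sndRow_ne_lastRow he)
  · rw [cyc_sq_eq_zero he _ (Mdef_hz t he), Mdef_d]
    exact mk1_mul_mk1_of_ne _ _ (sndRow_ne_lastRow he)
  · intro i hi
    rw [cyc_eq_zero he _ (Mdef_hz t he) i hi, zero_mul, mul_zero]

end Statement15Aux


/-- The componentwise constant-coefficient map. -/
noncomputable def piCC (k : Type) [Field k] (e : ℕ) :
    (Fin (e+1) → PowerSeries k) →+ (Fin (e+1) → k) :=
  AddMonoidHom.mk' (fun x r => PowerSeries.constantCoeff (x r))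
    (fun x y => by funext r; simp)

lemma piCC_apply (k : Type) [Field k] (e : ℕ) (x : Fin (e+1) → PowerSeries k) (r : Fin (e+1)) :
    piCC k e x r = PowerSeries.constantCoeff (x r) := rfl

set_option maxHeartbeats 2000000 in
set_option synthInstance.maxHeartbeats 1000000 in
/-- The free `k[[t]]`-module `M` with basis `m_1, …, m_{e+1}`
and structure maps `α_j(m_j) = m_{j+1}` (`j ≤ e-2`), `α_{e-1}(m_{e-1}) = t·m_{e+1}`,
`α_e(m_e) = m_1`, `δ(m_e) = m_{e+1}` (here `Mdef k[[t]] e t`) satisfies the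
defining relations of `Λ_e`; `M/tM ≅ W`; and `M/t²M` (here `Mdef (k[t]/(t²)) e t`)
is not isomorphic to the trivial lift `(k[t]/(t²)) ⊗ W`. -/
theorem lift_of_W (k : Type) [Field k] (e : ℕ) (he : 2 ≤ e) [NeZero e] :
    (Satisfies (Mdef (PowerSeries k) e PowerSeries.X) ∧
      Module.Free (PowerSeries k) (Mdef (PowerSeries k) e PowerSeries.X).V) ∧
    (∃ π : (Mdef (PowerSeries k) e PowerSeries.X).V →+ (Mdef k e 0).V,
      Function.Surjective π ∧
      (∀ x, π x = 0 ↔ ∃ y, x = (PowerSeries.X : PowerSeries k) • y) ∧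
      (∀ (c : k) x, π ((PowerSeries.C c) • x) = c • π x) ∧
      (∀ i x, π ((Mdef (PowerSeries k) e PowerSeries.X).v i x) = (Mdef k e 0).v i (π x)) ∧
      (∀ i x, π ((Mdef (PowerSeries k) e PowerSeries.X).a i x) = (Mdef k e 0).a i (π x)) ∧
      (∀ x, π ((Mdef (PowerSeries k) e PowerSeries.X).d x) = (Mdef k e 0).d (π x))) ∧
    (¬ ∃ f ∈ homSet (Mdef (Rtwo k) e (th2 k)) (Mdef (Rtwo k) e 0),
      Function.Bijective f) := by
  constructor
  · exact ⟨Mdef_satisfies _ he, inferInstance⟩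
  constructor
  · refine ⟨piCC k e, ?_, ?_, ?_, ?_, ?_, ?_⟩
    · intro y
      exact ⟨fun r => PowerSeries.C (y r), by funext r; simp [piCC_apply]⟩
    · intro x
      constructor
      · intro h
        have h' : ∀ r, (PowerSeries.X : PowerSeries k) ∣ x r := fun r =>
          PowerSeries.X_dvd_iff.mpr (congrFun h r)
        refine ⟨fun r => (h' r).choose, funext fun r => ?_⟩
        have hs := (h' r).choose_spec
        simpa [smul_eq_mul] using hs
      · rintro ⟨y, rfl⟩
        funext r
        simp only [piCC_apply, Pi.smul_apply, smul_eq_mul, map_mul,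
          PowerSeries.constantCoeff_X, zero_mul]
        rfl
    · intro c x
      funext r
      simp [piCC_apply, smul_eq_mul]
    · intro i x
      funext r
      by_cases h : vrt e r = i <;>
        simp [piCC_apply, Mdef_v, prj_apply, h]
    · intro i x
      rcases fin_cases3 he i with h | h | h
      · subst h
        rw [Mdef_a_ve (PowerSeries.X : PowerSeries k) he, Mdef_a_ve (0 : k) he]
        funext r
        by_cases h : r = (0 : Fin (e+1)) <;> simp [piCC_apply, mk1_apply, h]
      · subst h
        rw [Mdef_a_vem (PowerSeries.X : PowerSeries k) he, Mdef_a_vem (0 : k) he]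
        funext r
        by_cases h : r = lastRow e <;>
          simp [piCC_apply, mk1_apply, h, smul_eq_mul]
      · rw [Mdef_a_small (PowerSeries.X : PowerSeries k) he i h,
          Mdef_a_small (0 : k) he i h]
        funext r
        by_cases hr : r = (⟨i.val + 1, Nat.succ_lt_succ i.isLt⟩ : Fin (e+1)) <;>
          simp [piCC_apply, mk1_apply, hr]
    · intro x
      rw [Mdef_d (PowerSeries.X : PowerSeries k), Mdef_d (0 : k)]
      funext r
      by_cases h : r = lastRow e <;> simp [piCC_apply, mk1_apply, h]
  · rintro ⟨f, hf, hbij⟩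
    obtain ⟨hv, ha, hd⟩ := hf
    have hne : th2 k ≠ 0 := by
      intro h
      rw [th2, Ideal.Quotient.eq_zero_iff_mem, Ideal.mem_span_singleton] at h
      have hdeg := Polynomial.natDegree_le_of_dvd h Polynomial.X_ne_zero
      simp [Polynomial.natDegree_X_pow, Polynomial.natDegree_X] at hdeg
    have hai := ha (vem e)
    rw [Mdef_a_vem (th2 k) he, Mdef_a_vem (0 : Rtwo k) he] at hai
    set y : Fin (e+1) → Rtwo k := fun r => if r = (⟨e-2, by omega⟩ : Fin (e+1)) then 1 else 0
      with hy
    set z : Fin (e+1) → Rtwo k := fun r => if r = lastRow e then 1 else 0 with hz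
    have happ := LinearMap.congr_fun hai y
    have hAy : mk1 (⟨e-2, by omega⟩ : Fin (e+1)) (lastRow e)
        (th2 k • (LinearMap.id : Rtwo k →ₗ[Rtwo k] Rtwo k)) y = th2 k • z := by
      funext r
      by_cases h : r = lastRow e <;> simp [mk1_apply, h, hy, hz]
    have hBy : mk1 (⟨e-2, by omega⟩ : Fin (e+1)) (lastRow e)
        ((0 : Rtwo k) • (LinearMap.id : Rtwo k →ₗ[Rtwo k] Rtwo k)) (f y) = 0 := by
      funext r
      by_cases h : r = lastRow e <;> simp [mk1_apply, h]
    rw [LinearMap.comp_apply, LinearMap.comp_apply, hAy, hBy] at happ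
    have hz0 : th2 k • z = 0 := by
      apply hbij.1
      rw [map_zero]
      exact happ
    have := congrFun hz0 (lastRow e)
    simp [hz] at this
    exact hne this

end GBTA
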